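/- Let p0, f, Z_ψ, p_ψ be as in the energy-tilted setup, let q be a probability measure on Z with q ≪ p0, f ∈ L¹(q), KL(q ‖ p0) < ∞, and let r : Z → ℝ be q-integrable. Define 𝓛 := ∫ r dq − KL(q ‖ p0), 𝓛' := ∫ r dq − KL(q ‖ p_ψ), and for any probability measure p_g on Z with p_g ≪ p0, f ∈ L¹(p_g) and KL(p_g ‖ p0) < ∞, define the EVaLP upper bound 𝓛^up(p_g) := 𝓛 − ∫ f dq + ∫ f dp_g + KL(p_g ‖ p0). Then 𝓛' ≤ 𝓛^up(p_g) for every such p_g, and if f ∈ L¹(p_ψ) then equality holds at p_g = p_ψ. -/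

import Mathlib

open MeasureTheory Real
open scoped ENNReal

open Classical in
/-- Kullback–Leibler divergence: `∫ log (dq/dp) dq` if `q ≪ p` and the log-density
is `q`-integrable, and `∞` otherwise. -/
noncomputable def klDiv {Z : Type*} [MeasurableSpace Z] (q p : Measure Z) : ℝ≥0∞ :=
  if q ≪ p ∧ Integrable (llr q p) q then ENNReal.ofReal (∫ z, llr q p z ∂q) else ⊤

/-- Gibbs' inequality: the KL integrand integral is nonnegative. -/
lemma integral_llr_nonneg' {Z : Type*} [MeasurableSpace Z] {μ ν : Measure Z}
    [IsProbabilityMeasure μ] [IsProbabilityMeasure ν]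
    (hμν : μ ≪ ν) (h_int : Integrable (llr μ ν) μ) : 0 ≤ ∫ x, llr μ ν x ∂μ := by
  set g : Z → ℝ := fun x => ((μ.rnDeriv ν x)⁻¹).toReal with hg
  have hmeas : Measurable fun x => (μ.rnDeriv ν x)⁻¹ := (μ.measurable_rnDeriv ν).inv
  have hlint : ∫⁻ x, (μ.rnDeriv ν x)⁻¹ ∂μ ≤ 1 := by
    rw [← MeasureTheory.lintegral_rnDeriv_mul hμν hmeas.aemeasurable]
    calc ∫⁻ x, μ.rnDeriv ν x * (μ.rnDeriv ν x)⁻¹ ∂ν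
        ≤ ∫⁻ _, 1 ∂ν := lintegral_mono fun x => ENNReal.mul_inv_le_one _
      _ = 1 := by simp
  have hg_int : Integrable g μ := by
    refine integrable_toReal_of_lintegral_ne_top hmeas.aemeasurable ?_
    exact ne_top_of_le_ne_top ENNReal.one_ne_top hlint
  have hfin : ∀ᵐ x ∂μ, (μ.rnDeriv ν x)⁻¹ < ⊤ := by
    filter_upwards [Measure.rnDeriv_pos hμν] with x hx
    simp [ENNReal.inv_lt_top, hx]
  have hI : ∫ x, g x ∂μ ≤ 1 := by
    rw [hg, integral_toReal hmeas.aemeasurable hfin]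
    calc (∫⁻ x, (μ.rnDeriv ν x)⁻¹ ∂μ).toReal ≤ (1 : ℝ≥0∞).toReal :=
          ENNReal.toReal_mono ENNReal.one_ne_top hlint
      _ = 1 := by simp
  have hpt : ∀ᵐ x ∂μ, -llr μ ν x ≤ g x - 1 := by
    filter_upwards [Measure.rnDeriv_pos hμν, hμν.ae_le (Measure.rnDeriv_lt_top μ ν)]
      with x hpos hlt
    have ht : 0 < (μ.rnDeriv ν x).toReal := ENNReal.toReal_pos hpos.ne' hlt.ne
    have hgx : g x = ((μ.rnDeriv ν x).toReal)⁻¹ := ENNReal.toReal_inv _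
    rw [hgx, llr, ← Real.log_inv]
    exact Real.log_le_sub_one_of_pos (inv_pos.mpr ht)
  have hmono : ∫ x, -llr μ ν x ∂μ ≤ ∫ x, (g x - 1) ∂μ :=
    integral_mono_ae h_int.neg (hg_int.sub (integrable_const 1)) hpt
  rw [integral_neg, integral_sub hg_int (integrable_const 1)] at hmono
  simp only [integral_const, measure_univ, probReal_univ, smul_eq_mul, one_mul] at hmono
  linarith

/-- EVaLP upper bound: with `p_ψ = (1/Z_ψ) e^{−f} p0`, `𝓛 = ∫ r dq − KL(q ‖ p0)`,
`𝓛' = ∫ r dq − KL(q ‖ p_ψ)` and, for a sampler distribution `p_g`,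
`𝓛^up(p_g) = 𝓛 − ∫ f dq + ∫ f dp_g + KL(p_g ‖ p0)`, one has `𝓛' ≤ 𝓛^up(p_g)` for every
probability measure `p_g ≪ p0` with `f ∈ L¹(p_g)` and `KL(p_g ‖ p0) < ∞`; if moreover
`f ∈ L¹(p_ψ)`, equality holds at `p_g = p_ψ`. -/
theorem extended_elbo_le_evalp_upper_bound {Z : Type*} [MeasurableSpace Z]
    (p0 : Measure Z) [IsProbabilityMeasure p0] (f : Z → ℝ) (hf : Measurable f)
    (hint : Integrable (fun z => Real.exp (-f z)) p0)
    (hpos : 0 < ∫ z, Real.exp (-f z) ∂p0)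
    (q : Measure Z) [IsProbabilityMeasure q] (hac : q ≪ p0)
    (hfq : Integrable f q) (hkl : klDiv q p0 < ⊤)
    (r : Z → ℝ) (hr : Integrable r q) :
    (∀ pg : Measure Z, IsProbabilityMeasure pg → pg ≪ p0 → Integrable f pg →
        klDiv pg p0 < ⊤ →
      ∫ z, r z ∂q - (klDiv q (p0.tilted (fun z => -f z))).toReal ≤
        (∫ z, r z ∂q - (klDiv q p0).toReal) - ∫ z, f z ∂q + ∫ z, f z ∂pg +
          (klDiv pg p0).toReal) ∧
    (Integrable f (p0.tilted (fun z => -f z)) →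
      ∫ z, r z ∂q - (klDiv q (p0.tilted (fun z => -f z))).toReal =
        (∫ z, r z ∂q - (klDiv q p0).toReal) - ∫ z, f z ∂q +
          ∫ z, f z ∂(p0.tilted (fun z => -f z)) +
          (klDiv (p0.tilted (fun z => -f z)) p0).toReal) := by
  set pψ := p0.tilted (fun z => -f z) with hpψdef
  have hZ : Real.log (∫ z, Real.exp (-f z) ∂p0) = Real.log (∫ z, Real.exp (-f z) ∂p0) := rfl
  have hpψ : IsProbabilityMeasure pψ := isProbabilityMeasure_tilted hint
  -- q-side integrability of llr wrt p0
  have hql : Integrable (llr q p0) q := by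
    by_contra h
    rw [klDiv, if_neg (fun hc => h hc.2)] at hkl
    exact (lt_irrefl _ hkl).elim
  have hkq0 : (klDiv q p0).toReal = ∫ z, llr q p0 z ∂q := by
    rw [klDiv, if_pos ⟨hac, hql⟩, ENNReal.toReal_ofReal (integral_llr_nonneg' hac hql)]
  -- q vs pψ
  have hq_pψ : q ≪ pψ := hac.trans (absolutelyContinuous_tilted hint)
  have hql' : Integrable (llr q pψ) q :=
    integrable_llr_tilted_right hac hfq.neg hql hint
  have hIq' : ∫ z, llr q pψ z ∂q
      = ∫ z, llr q p0 z ∂q - ∫ z, -f z ∂q + Real.log (∫ z, Real.exp (-f z) ∂p0) :=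
    integral_llr_tilted_right hac hfq.neg hint hql
  rw [integral_neg] at hIq'
  have hkqψ : (klDiv q pψ).toReal = ∫ z, llr q pψ z ∂q := by
    rw [klDiv, if_pos ⟨hq_pψ, hql'⟩,
      ENNReal.toReal_ofReal (integral_llr_nonneg' hq_pψ hql')]
  constructor
  · intro pg hpg hpgac hfpg hklpg
    have hpgl : Integrable (llr pg p0) pg := by
      by_contra h
      rw [klDiv, if_neg (fun hc => h hc.2)] at hklpg
      exact (lt_irrefl _ hklpg).elim
    have hkg0 : (klDiv pg p0).toReal = ∫ z, llr pg p0 z ∂pg := by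
      rw [klDiv, if_pos ⟨hpgac, hpgl⟩,
        ENNReal.toReal_ofReal (integral_llr_nonneg' hpgac hpgl)]
    have hIg : ∫ z, llr pg pψ z ∂pg
        = ∫ z, llr pg p0 z ∂pg - ∫ z, -f z ∂pg + Real.log (∫ z, Real.exp (-f z) ∂p0) :=
      integral_llr_tilted_right hpgac hfpg.neg hint hpgl
    rw [integral_neg] at hIg
    have hgnn : 0 ≤ ∫ z, llr pg pψ z ∂pg :=
      integral_llr_nonneg' (hpgac.trans (absolutelyContinuous_tilted hint))
        (integrable_llr_tilted_right hpgac hfpg.neg hpgl hint)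
    rw [hkqψ, hkq0, hkg0]
    linarith
  · intro hfψ
    have hae : llr pψ p0 =ᵐ[pψ] fun x => -f x - Real.log (∫ z, Real.exp (-f z) ∂p0) := by
      have h0 : llr pψ p0 =ᵐ[p0] fun x => -f x - Real.log (∫ z, Real.exp (-f z) ∂p0) :=
        log_rnDeriv_tilted_left_self hint
      exact (tilted_absolutelyContinuous p0 (fun z => -f z)).ae_le h0
    have hψint : Integrable (llr pψ p0) pψ :=
      (Integrable.congr (hfψ.neg.sub (integrable_const _)) hae.symm)
    have hψval : ∫ z, llr pψ p0 z ∂pψ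
        = -∫ z, f z ∂pψ - Real.log (∫ z, Real.exp (-f z) ∂p0) := by
      have hneg : Integrable (fun a => -f a) pψ := hfψ.neg
      rw [integral_congr_ae hae, integral_sub hneg (integrable_const _), integral_neg,
        integral_const, probReal_univ, smul_eq_mul, one_mul]
    have hψnn : 0 ≤ ∫ z, llr pψ p0 z ∂pψ :=
      integral_llr_nonneg' (tilted_absolutelyContinuous p0 _) hψint
    have hkψ0 : (klDiv pψ p0).toReal = ∫ z, llr pψ p0 z ∂pψ := by
      rw [klDiv, if_pos ⟨tilted_absolutelyContinuous p0 _, hψint⟩,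
        ENNReal.toReal_ofReal hψnn]
    rw [hkqψ, hkq0, hkψ0]
    linarith
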